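/- Landau's theorem: let f : [1, ∞) → ℝ be locally integrable and suppose f(x) ≥ 0 for all sufficiently large x. Let σ_c be the infimum of real σ such that the integral g(s) = ∫₁^∞ f(x) x^{−s−1} dx converges for Re(s) > σ. If σ_c is finite, then g cannot be extended to a function analytic in a neighborhood of the real point s = σ_c. -/

import Mathlib

open MeasureTheory Filter

private lemma log_pow_le_aux {x δ : ℝ} (hx : 1 ≤ x) (hδ : 0 < δ) (n : ℕ) :
    (Real.log x) ^ n ≤ ((n : ℝ) / δ) ^ n * x ^ δ := by
  have hx0 : (0 : ℝ) < x := lt_of_lt_of_le one_pos hx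
  rcases Nat.eq_zero_or_pos n with hn | hn
  · subst hn
    simpa using Real.one_le_rpow hx hδ.le
  · have hnR : (0 : ℝ) < n := by exact_mod_cast hn
    have hlog : Real.log x ≤ ((n : ℝ) / δ) * x ^ (δ / n) := by
      have h1 : Real.log (x ^ (δ / (n : ℝ))) ≤ x ^ (δ / (n : ℝ)) := by
        have := Real.log_le_sub_one_of_pos (Real.rpow_pos_of_pos hx0 (δ / n))
        linarith
      have h2 : Real.log (x ^ (δ / (n : ℝ))) = (δ / n) * Real.log x :=
        Real.log_rpow hx0 _
      have h3 : (δ / (n : ℝ)) * Real.log x ≤ x ^ (δ / (n : ℝ)) := h2 ▸ h1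
      have hd : (0 : ℝ) < δ / n := div_pos hδ hnR
      calc Real.log x = ((n : ℝ) / δ) * ((δ / n) * Real.log x) := by
            field_simp
        _ ≤ ((n : ℝ) / δ) * x ^ (δ / (n : ℝ)) := by
            apply mul_le_mul_of_nonneg_left h3 (by positivity)
    calc (Real.log x) ^ n ≤ (((n : ℝ) / δ) * x ^ (δ / (n : ℝ))) ^ n :=
          pow_le_pow_left₀ (Real.log_nonneg hx) hlog n
      _ = ((n : ℝ) / δ) ^ n * (x ^ (δ / (n : ℝ))) ^ n := mul_pow _ _ _
      _ = ((n : ℝ) / δ) ^ n * x ^ δ := by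
          rw [← Real.rpow_natCast (x ^ (δ / (n : ℝ))) n, ← Real.rpow_mul hx0.le,
            div_mul_cancel₀]
          exact_mod_cast hnR.ne'

private lemma intAbs_aux (f : ℝ → ℝ) (hf : LocallyIntegrableOn f (Set.Ici 1)) (σ τ : ℝ) (n : ℕ)
    (hτS : IntegrableOn (fun x : ℝ => f x * x ^ (-τ - 1)) (Set.Ici 1)) (hτlt : τ < σ) :
      IntegrableOn (fun x => |f x| * (Real.log x) ^ n * x ^ (-σ - 1)) (Set.Ici 1) := by
  have hfm : AEStronglyMeasurable f (volume.restrict (Set.Ici (1:ℝ))) :=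
    hf.aestronglyMeasurable
  have hrpow_m : ∀ c : ℝ, AEStronglyMeasurable (fun x : ℝ => x ^ c)
      (volume.restrict (Set.Ici (1:ℝ))) := by
    intro c
    refine ContinuousOn.aestronglyMeasurable ?_ measurableSet_Ici
    exact ContinuousOn.rpow_const continuousOn_id fun x hx => Or.inl (by
      have : (1:ℝ) ≤ x := hx
      positivity)
  have hlog_m : ∀ m : ℕ, AEStronglyMeasurable (fun x : ℝ => (Real.log x) ^ m)
      (volume.restrict (Set.Ici (1:ℝ))) :=
    fun m => ((Real.measurable_log).pow_const m).aestronglyMeasurable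
  set δ := σ - τ with hδdef
  have hδ : 0 < δ := by simp [hδdef]; linarith
  have hbase : IntegrableOn (fun x => |f x| * x ^ (-τ - 1)) (Set.Ici 1) := by
    have h1 : IntegrableOn (fun x : ℝ => ‖f x * x ^ (-τ - 1)‖) (Set.Ici 1) := hτS.norm
    refine h1.congr_fun ?_ measurableSet_Ici
    intro x hx
    have hx1 : (1:ℝ) ≤ x := hx
    simp only [Real.norm_eq_abs, abs_mul,
      abs_of_nonneg (Real.rpow_nonneg (by linarith : (0:ℝ) ≤ x) (-τ - 1))]
  refine Integrable.mono' (hbase.const_mul (((n : ℝ)/δ) ^ n)) ?_ ?_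
  · exact (hfm.norm.mul (hlog_m n)).mul (hrpow_m _)
  · filter_upwards [ae_restrict_mem measurableSet_Ici] with x hx
    have hx1 : (1:ℝ) ≤ x := hx
    have hx0 : (0:ℝ) < x := lt_of_lt_of_le one_pos hx1
    have hnn : 0 ≤ |f x| * (Real.log x) ^ n * x ^ (-σ - 1) := by
      have := Real.log_nonneg hx1
      positivity
    rw [Real.norm_eq_abs, abs_of_nonneg hnn]
    have hlogle : (Real.log x) ^ n ≤ ((n : ℝ)/δ) ^ n * x ^ δ := log_pow_le_aux hx1 hδ n
    calc |f x| * (Real.log x) ^ n * x ^ (-σ - 1)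
        ≤ |f x| * (((n : ℝ)/δ) ^ n * x ^ δ) * x ^ (-σ - 1) := by
          gcongr
      _ = ((n : ℝ)/δ) ^ n * (|f x| * (x ^ δ * x ^ (-σ - 1))) := by ring
      _ = ((n : ℝ)/δ) ^ n * (|f x| * x ^ (-τ - 1)) := by
          rw [← Real.rpow_add hx0]
          congr 2
          rw [hδdef]; ring_nf


set_option maxHeartbeats 2000000 in
/-- Landau's theorem: if `f` is locally integrable on `[1, ∞)` and eventually
nonnegative, and `σc` is the abscissa of convergence of
`g(s) = ∫₁^∞ f(x) x^{-s-1} dx`, then `g` has no analytic continuation to a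
neighbourhood of the real point `σc`. -/
theorem stmt_14 (f : ℝ → ℝ) (hf : LocallyIntegrableOn f (Set.Ici 1))
    (hpos : ∀ᶠ x in atTop, 0 ≤ f x) (σc : ℝ)
    (hσc : IsGLB {σ : ℝ |
        IntegrableOn (fun x : ℝ => f x * x ^ (-σ - 1)) (Set.Ici 1)} σc) :
    ¬ ∃ (g : ℂ → ℂ) (U : Set ℂ), IsOpen U ∧ (σc : ℂ) ∈ U ∧
        AnalyticOnNhd ℂ g (U ∪ {s : ℂ | σc < s.re}) ∧
        ∀ s : ℂ, σc < s.re →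
          g s = ∫ x in Set.Ici (1 : ℝ), (f x : ℂ) * (x : ℂ) ^ (-s - 1) := by
  rintro ⟨g, U, hU, hUmem, hg, heq⟩
  set S := {σ : ℝ | IntegrableOn (fun x : ℝ => f x * x ^ (-σ - 1)) (Set.Ici 1)} with hSdef
  -- basic measurability
  have hfm : AEStronglyMeasurable f (volume.restrict (Set.Ici (1:ℝ))) :=
    hf.aestronglyMeasurable
  have hrpow_m : ∀ c : ℝ, AEStronglyMeasurable (fun x : ℝ => x ^ c)
      (volume.restrict (Set.Ici (1:ℝ))) := by
    intro c
    refine ContinuousOn.aestronglyMeasurable ?_ measurableSet_Ici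
    exact ContinuousOn.rpow_const continuousOn_id fun x hx => Or.inl (by
      have : (1:ℝ) ≤ x := hx
      positivity)
  have hlog_m : ∀ n : ℕ, AEStronglyMeasurable (fun x : ℝ => (Real.log x) ^ n)
      (volume.restrict (Set.Ici (1:ℝ))) :=
    fun n => ((Real.measurable_log).pow_const n).aestronglyMeasurable
  -- existence of elements of S below any σ > σc
  have hexists : ∀ σ : ℝ, σc < σ → ∃ τ ∈ S, τ < σ := by
    intro σ hσ
    by_contra h
    push_neg at h
    have : σ ∈ lowerBounds S := fun τ hτ => h τ hτ
    exact absurd (hσc.2 this) (not_le.mpr hσ)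
  -- key integrability lemma with logs
  have hIntAbs : ∀ σ : ℝ, σc < σ → ∀ n : ℕ,
      IntegrableOn (fun x => |f x| * (Real.log x) ^ n * x ^ (-σ - 1)) (Set.Ici 1) := by
    intro σ hσ n
    obtain ⟨τ, hτS, hτlt⟩ := hexists σ hσ
    exact intAbs_aux f hf σ τ n hτS hτlt
  -- membership in S for all σ > σc
  have hS : ∀ σ : ℝ, σc < σ → σ ∈ S := by
    intro σ hσ
    have hbound : IntegrableOn (fun x => |f x| * x ^ (-σ - 1)) (Set.Ici 1) :=
      (hIntAbs σ hσ 0).congr_fun (fun x hx => by simp) measurableSet_Ici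
    refine Integrable.mono' hbound (hfm.mul (hrpow_m _)) ?_
    filter_upwards [ae_restrict_mem measurableSet_Ici] with x hx
    have hx1 : (1:ℝ) ≤ x := hx
    simp only [Real.norm_eq_abs, abs_mul,
      abs_of_nonneg (Real.rpow_nonneg (by linarith : (0:ℝ) ≤ x) (-σ - 1))]
    exact le_rfl
  -- complex integrand measurability
  have hmC : ∀ (s : ℂ) (n : ℕ), AEStronglyMeasurable
      (fun x : ℝ => (f x : ℂ) * (-(Real.log x) : ℂ) ^ n * (x : ℂ) ^ (-s - 1))
      (volume.restrict (Set.Ici (1:ℝ))) := by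
    intro s n
    refine AEStronglyMeasurable.mul (AEStronglyMeasurable.mul ?_ ?_) ?_
    · exact Complex.continuous_ofReal.comp_aestronglyMeasurable hfm
    · exact (((Complex.measurable_ofReal.comp Real.measurable_log).neg).pow_const
        n).aestronglyMeasurable
    · refine ContinuousOn.aestronglyMeasurable ?_ measurableSet_Ici
      refine ContinuousOn.cpow_const (Complex.continuous_ofReal.continuousOn) ?_
      intro x hx
      have hx1 : (1:ℝ) ≤ x := hx
      exact Complex.ofReal_mem_slitPlane.2 (by linarith)
  -- norm of the complex integrand
  have hnorm : ∀ (s : ℂ) (n : ℕ) (x : ℝ), 1 ≤ x →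
      ‖(f x : ℂ) * (-(Real.log x) : ℂ) ^ n * (x : ℂ) ^ (-s - 1)‖
        = |f x| * (Real.log x) ^ n * x ^ (-s.re - 1) := by
    intro s n x hx
    have hx0 : (0:ℝ) < x := lt_of_lt_of_le one_pos hx
    rw [norm_mul, norm_mul, norm_pow]
    rw [Complex.norm_cpow_eq_rpow_re_of_pos hx0]
    have h1 : ‖((f x : ℝ) : ℂ)‖ = |f x| := by
      rw [Complex.norm_real, Real.norm_eq_abs]
    have h2 : ‖(-(Real.log x) : ℂ)‖ = Real.log x := by
      rw [norm_neg, Complex.norm_real, Real.norm_eq_abs, abs_of_nonneg (Real.log_nonneg hx)]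
    rw [h1, h2]
    have : (-s - 1).re = -s.re - 1 := by simp
    rw [this]
  -- complex integrability
  have hIntC : ∀ (s : ℂ), σc < s.re → ∀ n : ℕ,
      IntegrableOn (fun x : ℝ => (f x : ℂ) * (-(Real.log x) : ℂ) ^ n * (x : ℂ) ^ (-s - 1))
        (Set.Ici 1) := by
    intro s hs n
    refine Integrable.mono' (hIntAbs s.re hs n) (hmC s n) ?_
    filter_upwards [ae_restrict_mem measurableSet_Ici] with x hx
    exact le_of_eq (hnorm s n x hx)
  -- the family of derivatives of the Mellin transform
  set Gn : ℕ → ℂ → ℂ := fun n s =>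
    ∫ x in Set.Ici (1:ℝ), (f x : ℂ) * (-(Real.log x) : ℂ) ^ n * (x : ℂ) ^ (-s - 1) with hGndef
  have hH : IsOpen {z : ℂ | σc < z.re} := isOpen_lt continuous_const Complex.continuous_re
  -- derivative of Gn
  have hderiv : ∀ (n : ℕ) (s₀ : ℂ), σc < s₀.re → HasDerivAt (Gn n) (Gn (n+1) s₀) s₀ := by
    intro n s₀ hs₀
    set ε' := (s₀.re - σc) / 2 with hε'def
    have hε'pos : 0 < ε' := by simp [hε'def]; linarith
    have key := hasDerivAt_integral_of_dominated_loc_of_deriv_le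
      (μ := volume.restrict (Set.Ici (1:ℝ)))
      (F := fun (s : ℂ) (x : ℝ) => (f x : ℂ) * (-(Real.log x) : ℂ) ^ n * (x : ℂ) ^ (-s - 1))
      (F' := fun (s : ℂ) (x : ℝ) =>
        (f x : ℂ) * (-(Real.log x) : ℂ) ^ (n+1) * (x : ℂ) ^ (-s - 1))
      (bound := fun x => |f x| * (Real.log x) ^ (n+1) * x ^ (-(σc + ε') - 1))
      (Metric.ball_mem_nhds s₀ hε'pos)
      (Eventually.of_forall fun s => hmC s n)
      (hIntC s₀ hs₀ n)
      (hmC s₀ (n+1))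
      ?_ (hIntAbs (σc + ε') (by linarith) (n+1)) ?_
    · exact key.2
    · -- bound
      filter_upwards [ae_restrict_mem measurableSet_Ici] with x hx
      intro s hs
      have hx1 : (1:ℝ) ≤ x := hx
      rw [hnorm s (n+1) x hx1]
      have hre : σc + ε' ≤ s.re := by
        have h1 : |(s - s₀).re| ≤ ‖s - s₀‖ := Complex.abs_re_le_norm _
        have h2 : ‖s - s₀‖ < ε' := by
          rw [Metric.mem_ball, Complex.dist_eq] at hs
          exact hs
        have h3 : |(s - s₀).re| < ε' := lt_of_le_of_lt h1 h2
        rw [Complex.sub_re, abs_lt] at h3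
        have : s₀.re = σc + 2 * ε' := by rw [hε'def]; ring
        linarith [h3.1]
      have hmono : x ^ (-s.re - 1) ≤ x ^ (-(σc + ε') - 1) :=
        Real.rpow_le_rpow_of_exponent_le hx1 (by linarith)
      have h0 : 0 ≤ |f x| * (Real.log x) ^ (n+1) :=
        mul_nonneg (abs_nonneg _) (pow_nonneg (Real.log_nonneg hx1) _)
      calc |f x| * (Real.log x) ^ (n+1) * x ^ (-s.re - 1)
          ≤ |f x| * (Real.log x) ^ (n+1) * x ^ (-(σc + ε') - 1) :=
            mul_le_mul_of_nonneg_left hmono h0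
        _ = _ := rfl
    · -- differentiability
      filter_upwards [ae_restrict_mem measurableSet_Ici] with x hx
      intro s hs
      have hx1 : (1:ℝ) ≤ x := hx
      have hx0 : (0:ℝ) < x := lt_of_lt_of_le one_pos hx1
      have hxC : (x : ℂ) ≠ 0 := Complex.ofReal_ne_zero.mpr hx0.ne'
      have hcpow : HasDerivAt (fun s : ℂ => (x : ℂ) ^ (-s - 1))
          (-(Real.log x : ℂ) * (x : ℂ) ^ (-s - 1)) s := by
        have hfun : (fun s : ℂ => (x : ℂ) ^ (-s - 1))
            = fun s => Complex.exp (Complex.log (x : ℂ) * (-s - 1)) :=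
          funext fun z => Complex.cpow_def_of_ne_zero hxC _
        have h1 : HasDerivAt (fun s : ℂ => Complex.log (x : ℂ) * (-s - 1))
            (-Complex.log (x : ℂ)) s := by
          simpa [mul_neg_one, mul_comm] using
            (((hasDerivAt_id s).neg.sub_const 1).const_mul (Complex.log (x : ℂ)))
        have h2 := h1.cexp
        rw [hfun]
        refine h2.congr_deriv ?_
        rw [← Complex.cpow_def_of_ne_zero hxC, Complex.ofReal_log hx0.le]
        ring
      have h3 := hcpow.const_mul ((f x : ℂ) * (-(Real.log x) : ℂ) ^ n)
      refine h3.congr_deriv ?_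
      rw [pow_succ]
      ring
  -- iterated derivatives of Gn on the half-plane
  have hGiter : ∀ (n k : ℕ) (s : ℂ), σc < s.re → iteratedDeriv n (Gn k) s = Gn (k + n) s := by
    intro n
    induction n with
    | zero => intro k s _; simp [iteratedDeriv_zero]
    | succ n ih =>
      intro k s hs
      rw [iteratedDeriv_succ']
      have hev : deriv (Gn k) =ᶠ[nhds s] Gn (k+1) := by
        filter_upwards [hH.mem_nhds hs] with z hz
        exact (hderiv k z hz).deriv
      rw [hev.iteratedDeriv_eq n, ih (k+1) s hs]
      congr 1
      omega
  -- geometry: choose a ball around σc inside U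
  obtain ⟨r, hr, hball⟩ : ∃ r > 0, Metric.ball (σc : ℂ) r ⊆ U :=
    Metric.mem_nhds_iff.mp (hU.mem_nhds hUmem)
  set a : ℝ := σc + r/4 with hadef
  set σ' : ℝ := σc - r/8 with hσ'def
  set ε : ℝ := a - σ' with hεdef
  have hεval : ε = 3 * r / 8 := by rw [hεdef, hadef, hσ'def]; ring
  have hεpos : 0 < ε := by rw [hεval]; linarith
  have ha : σc < a := by rw [hadef]; linarith
  have haH : σc < ((a : ℂ)).re := by rwa [Complex.ofReal_re]
  -- g is differentiable on the ball of radius r/2 around a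
  have hg_diff : DifferentiableOn ℂ g (Metric.ball (a : ℂ) (r/2)) := by
    intro z hz
    refine ((hg z ?_).differentiableAt).differentiableWithinAt
    rcases lt_or_ge σc z.re with h | h
    · exact Or.inr h
    · left
      apply hball
      rw [Metric.mem_ball, Complex.dist_eq]
      have h1 : ‖z - a‖ < r/2 := by
        rw [Metric.mem_ball, Complex.dist_eq] at hz
        exact hz
      calc ‖z - σc‖ ≤ ‖z - a‖ + ‖(a : ℂ) - σc‖ := by
            exact norm_sub_le_norm_sub_add_norm_sub z (a : ℂ) (σc : ℂ)
        _ < r/2 + r/4 := by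
            apply add_lt_add_of_lt_of_le h1
            rw [hadef]
            push_cast
            rw [show (σc : ℂ) + r/4 - σc = (r/4 : ℝ) by push_cast; ring]
            rw [Complex.norm_of_nonneg (by linarith)]
        _ < r := by linarith
  -- Taylor series of g at a, evaluated at σ'
  have hσ'mem : (σ' : ℂ) ∈ Metric.ball (a : ℂ) (r/2) := by
    rw [Metric.mem_ball, Complex.dist_eq, ← Complex.ofReal_sub, Complex.norm_real, Real.norm_eq_abs,
      hσ'def, hadef]
    rw [abs_of_nonpos (by linarith)]
    linarith
  have hTaylor := Complex.hasSum_taylorSeries_on_ball hg_diff hσ'mem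
  -- identify iterated derivatives of g at a with Gn n a
  have hgG : g =ᶠ[nhds (a : ℂ)] Gn 0 := by
    filter_upwards [hH.mem_nhds haH] with z hz
    rw [heq z hz]
    simp only [hGndef, pow_zero, mul_one]
  have hiter_g : ∀ n : ℕ, iteratedDeriv n g (a : ℂ) = Gn n (a : ℂ) := by
    intro n
    rw [hgG.iteratedDeriv_eq n, hGiter n 0 (a : ℂ) haH]
    norm_num
  -- the real integrals In
  set In : ℕ → ℝ := fun n => ∫ x in Set.Ici (1:ℝ), f x * (Real.log x) ^ n * x ^ (-a - 1)
    with hIndef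
  have hIntPhi : ∀ n : ℕ,
      IntegrableOn (fun x => f x * (Real.log x) ^ n * x ^ (-a - 1)) (Set.Ici 1) := by
    intro n
    refine Integrable.mono' (hIntAbs a ha n) ((hfm.mul (hlog_m n)).mul (hrpow_m _)) ?_
    filter_upwards [ae_restrict_mem measurableSet_Ici] with x hx
    have hx1 : (1:ℝ) ≤ x := hx
    rw [Real.norm_eq_abs, abs_mul, abs_mul,
      abs_of_nonneg (pow_nonneg (Real.log_nonneg hx1) n),
      abs_of_nonneg (Real.rpow_nonneg (by linarith) _)]
  have hGnval : ∀ n : ℕ, Gn n (a : ℂ) = (((-1)^n * In n : ℝ) : ℂ) := by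
    intro n
    simp only [hGndef]
    have hcongr : ∀ x ∈ Set.Ici (1:ℝ),
        (f x : ℂ) * (-(Real.log x) : ℂ) ^ n * (x : ℂ) ^ (-(a : ℂ) - 1)
          = (((-1)^n * (f x * (Real.log x) ^ n * x ^ (-a - 1)) : ℝ) : ℂ) := by
      intro x hx
      have hx1 : (1:ℝ) ≤ x := hx
      have hx0 : (0:ℝ) < x := lt_of_lt_of_le one_pos hx1
      rw [show (-(a : ℂ) - 1) = (((-a - 1 : ℝ)) : ℂ) by push_cast; ring,
        ← Complex.ofReal_cpow hx0.le]
      push_cast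
      ring
    rw [MeasureTheory.setIntegral_congr_fun measurableSet_Ici hcongr]
    have h2 : (∫ x in Set.Ici (1:ℝ), (-1:ℝ)^n * (f x * (Real.log x)^n * x ^ (-a - 1)))
        = (-1)^n * In n := by
      simp only [hIndef]
      rw [MeasureTheory.integral_const_mul]
    rw [← h2]
    exact integral_ofReal
  -- extract summability from the Taylor series
  have hsummand : (fun n : ℕ => ((Nat.factorial n : ℕ) : ℂ)⁻¹ • ((σ' : ℂ) - (a : ℂ)) ^ n •
      iteratedDeriv n g (a : ℂ))
      = fun n : ℕ => ((((Nat.factorial n : ℕ) : ℝ)⁻¹ * ε ^ n * In n : ℝ) : ℂ) := by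
    funext n
    rw [hiter_g n, hGnval n]
    have h1 : ((σ' : ℂ) - (a : ℂ)) = (((-ε : ℝ)) : ℂ) := by
      rw [hεdef]; push_cast; ring
    rw [h1, smul_eq_mul, smul_eq_mul]
    have hneg : ((-1 : ℂ))^n * ((-1 : ℂ))^n = 1 := by rw [← mul_pow]; norm_num
    push_cast
    rw [neg_pow]
    linear_combination ((Nat.factorial n : ℂ))⁻¹ * (ε : ℂ)^n * ((In n : ℝ) : ℂ) * hneg
  have hSummable : Summable (fun n : ℕ => ((Nat.factorial n : ℕ) : ℝ)⁻¹ * ε ^ n * In n) := by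
    have := hTaylor.summable
    rw [hsummand] at this
    exact Complex.summable_ofReal.mp this
  -- choose X where f becomes nonnegative
  obtain ⟨X₀, hX₀⟩ := eventually_atTop.mp hpos
  set X : ℝ := max X₀ 1 with hXdef
  have hX1 : (1:ℝ) ≤ X := le_max_right _ _
  have hXpos : ∀ x : ℝ, X ≤ x → 0 ≤ f x := fun x hx => hX₀ x ((le_max_left _ _).trans hx)
  -- split In into head and tail
  set Hn : ℕ → ℝ := fun n => ∫ x in Set.Ico (1:ℝ) X, f x * (Real.log x) ^ n * x ^ (-a - 1)
    with hHndef
  set Jn : ℕ → ℝ := fun n => ∫ x in Set.Ici X, f x * (Real.log x) ^ n * x ^ (-a - 1)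
    with hJndef
  have hdisj : Disjoint (Set.Ico (1:ℝ) X) (Set.Ici X) := by
    rw [Set.disjoint_left]
    intro x hx1 hx2
    exact absurd hx2 (not_le.mpr hx1.2)
  have hsplit : ∀ n : ℕ, In n = Hn n + Jn n := by
    intro n
    simp only [hIndef, hHndef, hJndef]
    rw [← MeasureTheory.setIntegral_union hdisj measurableSet_Ici
      ((hIntPhi n).mono_set (Set.Ico_subset_Ici_self))
      ((hIntPhi n).mono_set (Set.Ici_subset_Ici.mpr hX1)),
      Set.Ico_union_Ici_eq_Ici hX1]
  have hJnn : ∀ n : ℕ, 0 ≤ Jn n := by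
    intro n
    refine setIntegral_nonneg measurableSet_Ici fun x hx => ?_
    have hx1 : (1:ℝ) ≤ x := hX1.trans hx
    have := hXpos x hx
    have := Real.log_nonneg hx1
    positivity
  -- head bound
  set C : ℝ := ∫ x in Set.Ico (1:ℝ) X, |f x| * x ^ (-a - 1) with hCdef
  have hIntHead : ∀ n : ℕ, IntegrableOn (fun x => |f x| * (Real.log x) ^ n * x ^ (-a - 1))
      (Set.Ico 1 X) := fun n => (hIntAbs a ha n).mono_set Set.Ico_subset_Ici_self
  have hHbound : ∀ n : ℕ, |Hn n| ≤ (Real.log X) ^ n * C := by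
    intro n
    simp only [hHndef]
    calc |∫ x in Set.Ico (1:ℝ) X, f x * (Real.log x) ^ n * x ^ (-a - 1)|
        ≤ ∫ x in Set.Ico (1:ℝ) X, |f x * (Real.log x) ^ n * x ^ (-a - 1)| := by
          simpa only [Real.norm_eq_abs] using
            norm_integral_le_integral_norm
              (fun x => f x * (Real.log x) ^ n * x ^ (-a - 1))
              (μ := volume.restrict (Set.Ico (1:ℝ) X))
      _ ≤ ∫ x in Set.Ico (1:ℝ) X, (Real.log X) ^ n * (|f x| * x ^ (-a - 1)) := by
          refine setIntegral_mono_on ?_ ?_ measurableSet_Ico ?_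
          · exact ((hIntPhi n).mono_set Set.Ico_subset_Ici_self).abs
          · have hC0 : IntegrableOn (fun x => |f x| * x ^ (-a - 1)) (Set.Ico 1 X) :=
              (hIntHead 0).congr_fun (fun x hx => by simp) measurableSet_Ico
            exact hC0.const_mul _
          · intro x hx
            have hx1 : (1:ℝ) ≤ x := hx.1
            have hx0 : (0:ℝ) < x := lt_of_lt_of_le one_pos hx1
            rw [abs_mul, abs_mul, abs_of_nonneg (pow_nonneg (Real.log_nonneg hx1) n),
              abs_of_nonneg (Real.rpow_nonneg hx0.le _)]
            have hlog : Real.log x ≤ Real.log X := Real.log_le_log hx0 hx.2.le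
            have h1 : (Real.log x) ^ n ≤ (Real.log X) ^ n :=
              pow_le_pow_left₀ (Real.log_nonneg hx1) hlog n
            have h2 : 0 ≤ |f x| * x ^ (-a - 1) :=
              mul_nonneg (abs_nonneg _) (Real.rpow_nonneg hx0.le _)
            calc |f x| * (Real.log x) ^ n * x ^ (-a - 1)
                = (Real.log x) ^ n * (|f x| * x ^ (-a - 1)) := by ring
              _ ≤ (Real.log X) ^ n * (|f x| * x ^ (-a - 1)) :=
                  mul_le_mul_of_nonneg_right h1 h2
      _ = (Real.log X) ^ n * C := by rw [MeasureTheory.integral_const_mul, hCdef]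
  -- summability of the tail series
  have hvsum : Summable (fun n : ℕ => ((Nat.factorial n : ℕ) : ℝ)⁻¹ * ε ^ n * Hn n) := by
    refine Summable.of_norm_bounded
      (g := fun n => (ε * Real.log X) ^ n / (Nat.factorial n : ℝ) * C) ?_ ?_
    · exact (Real.summable_pow_div_factorial (ε * Real.log X)).mul_right C
    · intro n
      rw [Real.norm_eq_abs, abs_mul, abs_mul]
      have h1 : |((Nat.factorial n : ℕ) : ℝ)⁻¹| = ((Nat.factorial n : ℕ) : ℝ)⁻¹ := abs_of_nonneg (by positivity)
      have h2 : |ε ^ n| = ε ^ n := abs_of_nonneg (pow_nonneg hεpos.le n)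
      rw [h1, h2]
      calc ((Nat.factorial n : ℕ) : ℝ)⁻¹ * ε ^ n * |Hn n| ≤ ((Nat.factorial n : ℕ) : ℝ)⁻¹ * ε ^ n * ((Real.log X) ^ n * C) := by
            refine mul_le_mul_of_nonneg_left (hHbound n) (by positivity)
        _ = (ε * Real.log X) ^ n / (Nat.factorial n : ℝ) * C := by rw [mul_pow]; ring
  have hwsum : Summable (fun n : ℕ => ((Nat.factorial n : ℕ) : ℝ)⁻¹ * ε ^ n * Jn n) := by
    refine (hSummable.sub hvsum).congr fun n => ?_
    rw [hsplit n]; ring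
  -- tail integrability at σ'
  have hTail : IntegrableOn (fun x => f x * x ^ (-σ' - 1)) (Set.Ici X) := by
    have hfmX : AEStronglyMeasurable f (volume.restrict (Set.Ici X)) :=
      (hf.mono_set (Set.Ici_subset_Ici.mpr hX1)).aestronglyMeasurable
    have hmeasX : AEStronglyMeasurable (fun x => f x * x ^ (-σ' - 1))
        (volume.restrict (Set.Ici X)) := by
      refine hfmX.mul (ContinuousOn.aestronglyMeasurable ?_ measurableSet_Ici)
      exact ContinuousOn.rpow_const continuousOn_id fun x hx => Or.inl (by
        have : X ≤ x := hx
        have : (0:ℝ) < x := lt_of_lt_of_le (lt_of_lt_of_le one_pos hX1) hx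
        positivity)
    constructor
    · exact hmeasX
    · -- finite integral via lintegral computation
      rw [hasFiniteIntegral_iff_norm]
      have hψint : ∀ n : ℕ, IntegrableOn
          (fun x => ((Nat.factorial n : ℕ) : ℝ)⁻¹ * ε ^ n * (f x * (Real.log x) ^ n * x ^ (-a - 1)))
          (Set.Ici X) := fun n =>
        (((hIntPhi n).mono_set (Set.Ici_subset_Ici.mpr hX1)).const_mul _)
      have hψnn : ∀ n : ℕ, ∀ x ∈ Set.Ici X,
          (0:ℝ) ≤ ((Nat.factorial n : ℕ) : ℝ)⁻¹ * ε ^ n * (f x * (Real.log x) ^ n * x ^ (-a - 1)) := by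
        intro n x hx
        have hx1 : (1:ℝ) ≤ x := hX1.trans hx
        have h1 := hXpos x hx
        have h2 := Real.log_nonneg hx1
        positivity
      have hkey : (∫⁻ x in Set.Ici X, ENNReal.ofReal ‖f x * x ^ (-σ' - 1)‖)
          = ∑' n : ℕ, ENNReal.ofReal (((Nat.factorial n : ℕ) : ℝ)⁻¹ * ε ^ n * Jn n) := by
        have hptwise : ∀ x ∈ Set.Ici X,
            ENNReal.ofReal ‖f x * x ^ (-σ' - 1)‖
              = ∑' n : ℕ, ENNReal.ofReal
                  (((Nat.factorial n : ℕ) : ℝ)⁻¹ * ε ^ n * (f x * (Real.log x) ^ n * x ^ (-a - 1))) := by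
          intro x hx
          have hx1 : (1:ℝ) ≤ x := hX1.trans hx
          have hx0 : (0:ℝ) < x := lt_of_lt_of_le one_pos hx1
          have hfx := hXpos x hx
          have hlogx := Real.log_nonneg hx1
          have hsum_x : Summable (fun n : ℕ =>
              ((Nat.factorial n : ℕ) : ℝ)⁻¹ * ε ^ n * (f x * (Real.log x) ^ n * x ^ (-a - 1))) := by
            refine ((Real.summable_pow_div_factorial (ε * Real.log x)).mul_left
              (f x * x ^ (-a - 1))).congr fun n => ?_
            rw [mul_pow]
            ring
          have htsum : (∑' n : ℕ,
              ((Nat.factorial n : ℕ) : ℝ)⁻¹ * ε ^ n * (f x * (Real.log x) ^ n * x ^ (-a - 1)))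
              = f x * x ^ (-σ' - 1) := by
            have h1 : (∑' n : ℕ,
                ((Nat.factorial n : ℕ) : ℝ)⁻¹ * ε ^ n * (f x * (Real.log x) ^ n * x ^ (-a - 1)))
                = (f x * x ^ (-a - 1)) * ∑' n : ℕ, (ε * Real.log x) ^ n / (Nat.factorial n : ℝ) := by
              rw [← tsum_mul_left]
              congr 1
              funext n
              rw [mul_pow]
              ring
            rw [h1]
            have h2 : (∑' n : ℕ, (ε * Real.log x) ^ n / (Nat.factorial n : ℝ)) = Real.exp (ε * Real.log x) := by
              rw [Real.exp_eq_exp_ℝ, NormedSpace.exp_eq_tsum_div]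
            rw [h2]
            have h3 : Real.exp (ε * Real.log x) = x ^ ε := by
              rw [Real.rpow_def_of_pos hx0, mul_comm]
            rw [h3, mul_assoc, ← Real.rpow_add hx0]
            congr 2
            rw [hεdef]
            ring
          rw [Real.norm_eq_abs, abs_of_nonneg (by positivity), ← htsum]
          exact ENNReal.ofReal_tsum_of_nonneg (fun n => hψnn n x hx) hsum_x
        calc (∫⁻ x in Set.Ici X, ENNReal.ofReal ‖f x * x ^ (-σ' - 1)‖)
            = ∫⁻ x in Set.Ici X, ∑' n : ℕ, ENNReal.ofReal
                (((Nat.factorial n : ℕ) : ℝ)⁻¹ * ε ^ n * (f x * (Real.log x) ^ n * x ^ (-a - 1))) := by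
              refine setLIntegral_congr_fun measurableSet_Ici
                (fun x hx => hptwise x hx)
          _ = ∑' n : ℕ, ∫⁻ x in Set.Ici X, ENNReal.ofReal
                (((Nat.factorial n : ℕ) : ℝ)⁻¹ * ε ^ n * (f x * (Real.log x) ^ n * x ^ (-a - 1))) := by
              refine lintegral_tsum fun n => ?_
              exact (ENNReal.measurable_ofReal.comp_aemeasurable
                (hψint n).aestronglyMeasurable.aemeasurable)
          _ = ∑' n : ℕ, ENNReal.ofReal (((Nat.factorial n : ℕ) : ℝ)⁻¹ * ε ^ n * Jn n) := by
              congr 1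
              funext n
              rw [← ofReal_integral_eq_lintegral_ofReal (hψint n)
                (by filter_upwards [ae_restrict_mem measurableSet_Ici] with x hx
                    exact hψnn n x hx)]
              congr 1
              rw [MeasureTheory.integral_const_mul]
      rw [hkey]
      rw [← ENNReal.ofReal_tsum_of_nonneg
        (fun n => mul_nonneg (by positivity) (hJnn n)) hwsum]
      exact ENNReal.ofReal_lt_top
  -- head integrability at σ'
  have hHead : IntegrableOn (fun x => f x * x ^ (-σ' - 1)) (Set.Ico 1 X) := by
    have h1 : IntegrableOn f (Set.Icc 1 X) :=
      hf.integrableOn_compact_subset (Set.Icc_subset_Ici_self) isCompact_Icc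
    have h2 : ContinuousOn (fun x : ℝ => x ^ (-σ' - 1)) (Set.Icc 1 X) :=
      ContinuousOn.rpow_const continuousOn_id fun x hx => Or.inl (by
        have : (1:ℝ) ≤ x := hx.1
        positivity)
    exact (h1.mul_continuousOn h2 isCompact_Icc).mono_set Set.Ico_subset_Icc_self
  -- conclude
  have hint : IntegrableOn (fun x : ℝ => f x * x ^ (-σ' - 1)) (Set.Ici 1) := by
    rw [← Set.Ico_union_Ici_eq_Ici hX1]
    exact hHead.union hTail
  have : σc ≤ σ' := hσc.1 hint
  rw [hσ'def] at this
  linarith
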